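/- Let N ⊆ Δ̂⁺ be a finite set of positive affine roots. For every Weyl chamber 𝔠 there is exactly one sign vector ε : N → {±1} such that C_ε has nonempty interior and the recession cone of C_ε contains 𝔠; namely, ε(α) is the (constant) sign of ⟨β_α, x⟩ for x ∈ 𝔠, for each α = (β_α, n_α) ∈ N. -/

import Mathlib

open scoped RealInnerProductSpace

/-- A finite irreducible crystallographic root system in a real inner product space,
with a chosen positive system, simple roots, and highest root. -/
structure RootSystemData (V : Type*) [NormedAddCommGroup V] [InnerProductSpace ℝ V] where
  Φ : Finset V
  pos : Finset V
  simples : Finset V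
  θ : V
  nonzero : ∀ β ∈ Φ, β ≠ 0
  span_eq_top : Submodule.span ℝ (Φ : Set V) = ⊤
  neg_mem : ∀ β ∈ Φ, -β ∈ Φ
  pos_subset : pos ⊆ Φ
  pos_or_neg : ∀ β ∈ Φ, β ∈ pos ∨ -β ∈ pos
  not_pos_neg : ∀ β ∈ Φ, ¬(β ∈ pos ∧ -β ∈ pos)
  simples_subset : simples ⊆ pos
  pos_nat_combo : ∀ β ∈ pos, ∃ c : V → ℕ, β = ∑ γ ∈ simples, (c γ : ℝ) • γ
  crystallographic : ∀ β ∈ Φ, ∀ γ ∈ Φ, ∃ m : ℤ, 2 * ⟪β, γ⟫ = (m : ℝ) * ⟪β, β⟫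
  refl_mem : ∀ β ∈ Φ, ∀ γ ∈ Φ, γ - (2 * ⟪β, γ⟫ / ⟪β, β⟫) • β ∈ Φ
  irreducible : ∀ s : Finset V, s ⊆ Φ →
    (∀ β ∈ s, ∀ γ ∈ Φ, γ ∉ s → ⟪β, γ⟫ = 0) → s = ∅ ∨ s = Φ
  theta_mem : θ ∈ pos
  theta_highest : ∀ β ∈ Φ, ∃ c : V → ℝ, (∀ γ, 0 ≤ c γ) ∧ θ - β = ∑ γ ∈ simples, c γ • γ

variable {V : Type*} [NormedAddCommGroup V] [InnerProductSpace ℝ V]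

/-- Evaluation of the affine root `(β, n)` at the point `x`:  `⟪β, x⟫ + n`. -/
def aeval (α : V × ℤ) (x : V) : ℝ := ⟪α.1, x⟫ + (α.2 : ℝ)

/-- The orthogonal affine reflection in the hyperplane `H_{(β,n)} = {x | ⟪β,x⟫ + n = 0}`. -/
noncomputable def affRefl (β : V) (n : ℤ) : Equiv.Perm V :=
  Function.Involutive.toPerm
    (fun x => x - ((2 * (⟪β, x⟫ + (n : ℝ))) / ⟪β, β⟫) • β)
    (by
      intro x
      by_cases hβ : β = 0
      · simp [hβ]
      · have hb : ⟪β, β⟫ ≠ 0 := by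
          simpa using (inner_self_ne_zero (𝕜 := ℝ) (x := β)).mpr hβ
        have h1 : ⟪β, x - ((2 * (⟪β, x⟫ + (n : ℝ))) / ⟪β, β⟫) • β⟫
            = ⟪β, x⟫ - (2 * (⟪β, x⟫ + (n : ℝ))) := by
          rw [inner_sub_right, real_inner_smul_right]
          field_simp
        show (x - ((2 * (⟪β, x⟫ + (n : ℝ))) / ⟪β, β⟫) • β)
            - ((2 * (⟪β, x - ((2 * (⟪β, x⟫ + (n : ℝ))) / ⟪β, β⟫) • β⟫ + (n : ℝ)))
                / ⟪β, β⟫) • β = x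
        rw [h1]
        have h2 : (2 * ((⟪β, x⟫ - 2 * (⟪β, x⟫ + (n : ℝ))) + (n : ℝ))) / ⟪β, β⟫
            = -((2 * (⟪β, x⟫ + (n : ℝ))) / ⟪β, β⟫) := by
          field_simp
          ring
        rw [h2, neg_smul, sub_neg_eq_add, sub_add_cancel])

namespace RootSystemData

/-- The set of positive affine roots `Δ̂⁺`. -/
def posAff (R : RootSystemData V) : Set (V × ℤ) :=
  {α | α.1 ∈ R.Φ ∧ (0 < α.2 ∨ (α.2 = 0 ∧ α.1 ∈ R.pos))}

/-- The affine Weyl group, generated by all reflections in affine root hyperplanes. -/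
def weylGroup (R : RootSystemData V) : Subgroup (Equiv.Perm V) :=
  Subgroup.closure {g | ∃ β ∈ R.Φ, ∃ n : ℤ, g = affRefl β n}

/-- The fundamental alcove. -/
def fundAlcove (R : RootSystemData V) : Set V :=
  {x | (∀ β ∈ R.simples, 0 < ⟪β, x⟫) ∧ ⟪R.θ, x⟫ < 1}

/-- Simple affine reflections: reflections in the walls of the fundamental alcove. -/
def simpleAffRefls (R : RootSystemData V) : Set (Equiv.Perm V) :=
  {g | (∃ β ∈ R.simples, g = affRefl β 0) ∨ g = affRefl (-R.θ) 1}

/-- Simple affine roots: the positive affine roots whose hyperplanes are the walls of the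
fundamental alcove. -/
def simpleAffRoots (R : RootSystemData V) : Set (V × ℤ) :=
  {α | (α.2 = 0 ∧ α.1 ∈ R.simples) ∨ α = (-R.θ, 1)}

/-- `α` lies in `w · Δ̂⁺`, i.e. the function `x ↦ α (w x)` is (the evaluation of) a positive
affine root. -/
def memWPos (R : RootSystemData V) (w : Equiv.Perm V) (α : V × ℤ) : Prop :=
  ∃ γ ∈ R.posAff, ∀ x, aeval α (w x) = aeval γ x

end RootSystemData

/-- Two regions lie in the same Scopes chamber for `N`: every `α ∈ N` takes the same sign
on both. -/
def SameScopes (N : Set (V × ℤ)) (C C' : Set V) : Prop :=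
  ∀ α ∈ N, ∀ x ∈ C, ∀ y ∈ C', (0 < aeval α x ↔ 0 < aeval α y)

/-- The recession cone of a subset of `V`. -/
def recessionCone (C : Set V) : Set V :=
  {h | ∀ x ∈ C, ∀ t : ℝ, 0 ≤ t → x + t • h ∈ C}

/-- The (closed) chamber `C_ε` cut out by a sign vector `ε` on `N`. -/
def signedChamber (N : Set (V × ℤ)) (ε : N → ℝ) : Set V :=
  {x | ∀ α : N, 0 ≤ ε α * aeval (α : V × ℤ) x}

/-- A Weyl chamber: a connected component of the complement of the linear hyperplanes
`⟪β, ·⟫ = 0` for `β ∈ Φ`. -/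
def IsWeylChamber (R : RootSystemData V) (c : Set V) : Prop :=
  ∃ x, (∀ β ∈ R.Φ, ⟪β, x⟫ ≠ 0) ∧
    c = connectedComponentIn {y | ∀ β ∈ R.Φ, ⟪β, y⟫ ≠ 0} x

/-- For every Weyl chamber `𝔠` there is exactly one sign vector `ε` such that
`C_ε` has nonempty interior and the recession cone of `C_ε` contains `𝔠`; namely, `ε(α)` is the
(constant) sign of `⟪β_α, x⟫` for `x ∈ 𝔠`. -/
theorem existsUnique_signedChamber_recession_supset_weylChamber
    [FiniteDimensional ℝ V]
    (R : RootSystemData V) (N : Set (V × ℤ)) (hN : N ⊆ R.posAff) (hNfin : N.Finite)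
    (c : Set V) (hc : IsWeylChamber R c) :
    (∃! ε : N → ℝ, (∀ α, ε α = 1 ∨ ε α = -1) ∧
        (interior (signedChamber N ε)).Nonempty ∧
        c ⊆ recessionCone (signedChamber N ε)) ∧
    (∀ ε : N → ℝ, ((∀ α, ε α = 1 ∨ ε α = -1) ∧
        (interior (signedChamber N ε)).Nonempty ∧
        c ⊆ recessionCone (signedChamber N ε)) →
      ∀ α : N, ∀ x ∈ c, 0 < ε α * ⟪(α : V × ℤ).1, x⟫) := by
  obtain ⟨x₀, hx₀, hceq⟩ := hc
  have hx₀c : x₀ ∈ c := hceq ▸ mem_connectedComponentIn hx₀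
  have hcS : c ⊆ {y | ∀ β ∈ R.Φ, ⟪β, y⟫ ≠ 0} :=
    hceq ▸ connectedComponentIn_subset _ x₀
  have hconn : IsPreconnected c := by
    rw [hceq]; exact isPreconnected_connectedComponentIn
  -- sign constancy on the chamber
  have hsign : ∀ β ∈ R.Φ, ∀ x ∈ c, (0 < ⟪β, x⟫ ↔ 0 < ⟪β, x₀⟫) := by
    intro β hβ x hx
    have hf : ContinuousOn (fun y => ⟪β, y⟫) c :=
      (continuous_const.inner continuous_id).continuousOn
    have hxne : ⟪β, x⟫ ≠ 0 := hcS hx β hβ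
    have hx₀ne : ⟪β, x₀⟫ ≠ 0 := hx₀ β hβ
    constructor
    · intro h
      by_contra h0
      have h0' : ⟪β, x₀⟫ < 0 := lt_of_le_of_ne (not_lt.mp h0) hx₀ne
      have := hconn.intermediate_value hx₀c hx hf (Set.mem_Icc.mpr ⟨le_of_lt h0', le_of_lt h⟩)
      obtain ⟨z, hz, hz0⟩ := this
      exact hcS hz β hβ hz0
    · intro h
      by_contra h0
      have h0' : ⟪β, x⟫ < 0 := lt_of_le_of_ne (not_lt.mp h0) hxne
      have := hconn.intermediate_value hx hx₀c hf (Set.mem_Icc.mpr ⟨le_of_lt h0', le_of_lt h⟩)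
      obtain ⟨z, hz, hz0⟩ := this
      exact hcS hz β hβ hz0
  have hβΦ : ∀ α : N, (α : V × ℤ).1 ∈ R.Φ := fun α => (hN α.2).1
  -- the key characterization (second clause)
  have key : ∀ ε : N → ℝ, ((∀ α, ε α = 1 ∨ ε α = -1) ∧
        (interior (signedChamber N ε)).Nonempty ∧
        c ⊆ recessionCone (signedChamber N ε)) →
      ∀ α : N, ∀ x ∈ c, 0 < ε α * ⟪(α : V × ℤ).1, x⟫ := by
    rintro ε ⟨hpm, ⟨y, hy⟩, hrec⟩ α x hx
    have hy' : y ∈ signedChamber N ε := interior_subset hy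
    have hne : ⟪(α : V × ℤ).1, x⟫ ≠ 0 := hcS hx _ (hβΦ α)
    have hεne : ε α ≠ 0 := by rcases hpm α with h | h <;> simp [h]
    rcases (mul_ne_zero hεne hne).lt_or_gt with hlt | hgt
    · exfalso
      set a := ε α * ⟪(α : V × ℤ).1, x⟫ with ha
      have hb : 0 ≤ ε α * aeval (α : V × ℤ) y := hy' α
      set b := ε α * aeval (α : V × ℤ) y with hbdef
      set t := (b + 1) / (-a) with htdef
      have ht : 0 ≤ t := div_nonneg (by linarith) (by linarith)
      have hmem := hrec hx y hy' t ht α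
      have hcomp : ε α * aeval (α : V × ℤ) (y + t • x) = b + t * a := by
        simp only [aeval, inner_add_right, real_inner_smul_right, hbdef, ha]
        ring
      have hane : a ≠ 0 := ne_of_lt hlt
      have hta : t * a = -(b + 1) := by
        rw [htdef]; field_simp
      rw [hcomp, hta] at hmem
      linarith
    · exact hgt
  -- the canonical sign vector
  set ε₀ : N → ℝ := fun α => if 0 < ⟪(α : V × ℤ).1, x₀⟫ then 1 else -1 with hε₀
  have hpm₀ : ∀ α, ε₀ α = 1 ∨ ε₀ α = -1 := by
    intro α; by_cases h : 0 < ⟪(α : V × ℤ).1, x₀⟫ <;> simp [hε₀, h]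
  have hpos : ∀ x ∈ c, ∀ α : N, 0 < ε₀ α * ⟪(α : V × ℤ).1, x⟫ := by
    intro x hx α
    have hxne : ⟪(α : V × ℤ).1, x⟫ ≠ 0 := hcS hx _ (hβΦ α)
    have hs := hsign _ (hβΦ α) x hx
    by_cases h : 0 < ⟪(α : V × ℤ).1, x₀⟫
    · have := hs.mpr h
      simp only [hε₀, if_pos h]; linarith
    · have hxneg : ⟪(α : V × ℤ).1, x⟫ < 0 :=
        lt_of_le_of_ne (not_lt.mp (fun hc' => h (hs.mp hc'))) hxne
      simp only [hε₀, if_neg h]; linarith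
  haveI : Finite N := hNfin
  -- a point where all inequalities are strict
  have hev : ∀ α : N, ∀ᶠ t : ℝ in Filter.atTop,
      0 < ε₀ α * aeval (α : V × ℤ) (t • x₀) := by
    intro α
    have ha : 0 < ε₀ α * ⟪(α : V × ℤ).1, x₀⟫ := hpos x₀ hx₀c α
    filter_upwards [Filter.eventually_gt_atTop
      ((-(ε₀ α * ((α : V × ℤ).2 : ℝ))) / (ε₀ α * ⟪(α : V × ℤ).1, x₀⟫))] with t htt
    have := (div_lt_iff₀ ha).mp htt
    have hcomp : ε₀ α * aeval (α : V × ℤ) (t • x₀)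
        = t * (ε₀ α * ⟪(α : V × ℤ).1, x₀⟫) + ε₀ α * ((α : V × ℤ).2 : ℝ) := by
      simp only [aeval, real_inner_smul_right]; ring
    rw [hcomp]; linarith
  obtain ⟨t, htp⟩ := (Filter.eventually_all.mpr hev).exists
  have hUopen : IsOpen {x : V | ∀ α : N, 0 < ε₀ α * aeval (α : V × ℤ) x} := by
    have heq : {x : V | ∀ α : N, 0 < ε₀ α * aeval (α : V × ℤ) x}
        = ⋂ α : N, {x : V | 0 < ε₀ α * aeval (α : V × ℤ) x} := by
      ext x; simp
    rw [heq]
    refine isOpen_iInter_of_finite fun α => ?_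
    have hcont : Continuous fun x : V => ε₀ α * aeval (α : V × ℤ) x := by
      simp only [aeval]
      exact continuous_const.mul ((continuous_const.inner continuous_id).add continuous_const)
    exact isOpen_lt continuous_const hcont
  have hUsub : {x : V | ∀ α : N, 0 < ε₀ α * aeval (α : V × ℤ) x} ⊆ signedChamber N ε₀ :=
    fun x hx α => le_of_lt (hx α)
  have hint : (interior (signedChamber N ε₀)).Nonempty :=
    ⟨t • x₀, interior_maximal hUsub hUopen htp⟩
  have hrec₀ : c ⊆ recessionCone (signedChamber N ε₀) := by
    intro h hh x hx s hs α
    have hcomp : ε₀ α * aeval (α : V × ℤ) (x + s • h)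
        = ε₀ α * aeval (α : V × ℤ) x + s * (ε₀ α * ⟪(α : V × ℤ).1, h⟫) := by
      simp only [aeval, inner_add_right, real_inner_smul_right]; ring
    have h1 : 0 ≤ ε₀ α * aeval (α : V × ℤ) x := hx α
    have h2 : 0 < ε₀ α * ⟪(α : V × ℤ).1, h⟫ := hpos h hh α
    show 0 ≤ ε₀ α * aeval (α : V × ℤ) (x + s • h)
    rw [hcomp]; nlinarith
  refine ⟨⟨ε₀, ⟨hpm₀, hint, hrec₀⟩, ?_⟩, key⟩
  intro ε' hε'
  funext α
  have h1 := key ε' hε' α x₀ hx₀c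
  have h2 := hpos x₀ hx₀c α
  rcases hε'.1 α with h | h <;> rcases hpm₀ α with h' | h' <;>
    rw [h, h'] <;> first | rfl | (exfalso; rw [h] at h1; rw [h'] at h2; linarith)
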